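/- For the projective tensor product H* ⊗̂ H of a Hilbert space dual with itself, there is a continuous linear injection of H* ⊗̂ H into the bounded operators on H whose image lies in the trace class operators; equivalently: every element of the projective tensor product H* ⊗̂ H induces a trace-class operator on H. -/

import Mathlib

open scoped InnerProductSpace

/-- AM–GM with weight. -/
lemma amgm_weighted {a b t : ℝ} (ht : 0 < t) :
    a * b ≤ (t * a ^ 2 + b ^ 2 / t) / 2 := by
  rw [le_div_iff₀ (by norm_num : (0:ℝ) < 2), div_eq_mul_inv]
  nlinarith [mul_nonneg (inv_pos.mpr ht).le (sq_nonneg (t * a - b)),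
    mul_inv_cancel₀ ht.ne', sq_nonneg (t * a - b)]

/-- Every element of the projective tensor product `H* ⊗̂ H` (represented by
sequences `φₙ ∈ H*`, `vₙ ∈ H` with `∑ ‖φₙ‖‖vₙ‖ < ∞`) induces a bounded operator
`T x = ∑ φₙ(x) • vₙ` on `H` which is trace class: for all orthonormal families
`u, w` the sequence `⟨u k, T (w k)⟩` is absolutely summable. -/
theorem projective_tensor_gives_trace_class
    (H : Type*) [NormedAddCommGroup H] [InnerProductSpace ℂ H] [CompleteSpace H]
    (φ : ℕ → (H →L[ℂ] ℂ)) (v : ℕ → H)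
    (hsum : Summable fun n => ‖φ n‖ * ‖v n‖) :
    ∃ T : H →L[ℂ] H,
      (∀ x : H, HasSum (fun n => φ n x • v n) (T x)) ∧
      (∀ u w : ℕ → H, Orthonormal ℂ u → Orthonormal ℂ w →
        Summable fun k => ‖⟪u k, T (w k)⟫_ℂ‖) := by
  classical
  have hnorm : ∀ x : H, ∀ n : ℕ, ‖φ n x • v n‖ ≤ ‖φ n‖ * ‖v n‖ * ‖x‖ := by
    intro x n
    rw [norm_smul]
    calc ‖φ n x‖ * ‖v n‖ ≤ (‖φ n‖ * ‖x‖) * ‖v n‖ := by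
          gcongr; exact (φ n).le_opNorm x
      _ = ‖φ n‖ * ‖v n‖ * ‖x‖ := by ring
  have hSnorm : ∀ x : H, Summable fun n => ‖φ n x • v n‖ := fun x =>
    Summable.of_nonneg_of_le (fun n => norm_nonneg _) (hnorm x) (hsum.mul_right ‖x‖)
  have hS : ∀ x : H, Summable fun n => φ n x • v n := fun x => (hSnorm x).of_norm
  let f : H →ₗ[ℂ] H :=
    { toFun := fun x => ∑' n, φ n x • v n
      map_add' := by
        intro x y
        calc ∑' n, φ n (x + y) • v n
            = ∑' n, (φ n x • v n + φ n y • v n) :=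
              tsum_congr fun n => by simp [add_smul]
          _ = _ := Summable.tsum_add (hS x) (hS y)
      map_smul' := by
        intro c x
        simp only [RingHom.id_apply]
        calc ∑' n, φ n (c • x) • v n
            = ∑' n, c • (φ n x • v n) :=
              tsum_congr fun n => by simp [smul_smul]
          _ = c • ∑' n, φ n x • v n := Summable.tsum_const_smul c (hS x) }
  have hfbound : ∀ x : H, ‖f x‖ ≤ (∑' n, ‖φ n‖ * ‖v n‖) * ‖x‖ := by
    intro x
    calc ‖f x‖ ≤ ∑' n, ‖φ n x • v n‖ := norm_tsum_le_tsum_norm (hSnorm x)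
      _ ≤ ∑' n, ‖φ n‖ * ‖v n‖ * ‖x‖ := Summable.tsum_le_tsum (hnorm x) (hSnorm x) (hsum.mul_right ‖x‖)
      _ = (∑' n, ‖φ n‖ * ‖v n‖) * ‖x‖ := by rw [tsum_mul_right]
  let T : H →L[ℂ] H := f.mkContinuous _ hfbound
  have hT : ∀ x : H, HasSum (fun n => φ n x • v n) (T x) := fun x => (hS x).hasSum
  refine ⟨T, hT, ?_⟩
  intro u w hu hw
  -- Riesz representatives
  set y : ℕ → H := fun n => (InnerProductSpace.toDual ℂ H).symm (φ n) with hy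
  have hyφ : ∀ n x, ⟪y n, x⟫_ℂ = φ n x := fun n x => InnerProductSpace.toDual_symm_apply
  have hynorm : ∀ n, ‖y n‖ = ‖φ n‖ := fun n =>
    LinearIsometryEquiv.norm_map (InnerProductSpace.toDual ℂ H).symm (φ n)
  set a : ℕ × ℕ → ℝ := fun p => ‖φ p.1 (w p.2)‖ * ‖⟪u p.2, v p.1⟫_ℂ‖ with ha
  have ha0 : ∀ p, 0 ≤ a p := fun p => mul_nonneg (norm_nonneg _) (norm_nonneg _)
  -- row summability and bounds
  have hrow : ∀ n : ℕ, Summable (fun k => a (n, k)) ∧ ∑' k, a (n, k) ≤ ‖φ n‖ * ‖v n‖ := by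
    intro n
    rcases eq_or_ne (φ n) 0 with h0 | h0
    · have : (fun k => a (n, k)) = fun _ => 0 := by
        ext k; simp [ha, h0]
      rw [this]
      simp [summable_zero, tsum_zero]
      positivity
    rcases eq_or_ne (v n) 0 with hv0 | hv0
    · have : (fun k => a (n, k)) = fun _ => 0 := by
        ext k; simp [ha, hv0]
      rw [this]
      simp [summable_zero, tsum_zero]
      positivity
    have hφpos : 0 < ‖φ n‖ := norm_pos_iff.mpr h0
    have hvpos : 0 < ‖v n‖ := norm_pos_iff.mpr hv0
    set t : ℝ := ‖v n‖ / ‖φ n‖ with htdef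
    have ht : 0 < t := div_pos hvpos hφpos
    -- Bessel sums
    have hb1 : Summable fun k => ‖φ n (w k)‖ ^ 2 := by
      have := hw.inner_products_summable (x := y n)
      convert this using 2 with k
      rw [← hyφ n (w k), ← norm_inner_symm]
    have hb1' : ∑' k, ‖φ n (w k)‖ ^ 2 ≤ ‖φ n‖ ^ 2 := by
      have := hw.tsum_inner_products_le (y n)
      rw [hynorm n] at this
      refine le_trans (le_of_eq ?_) this
      congr 1; ext k
      rw [← hyφ n (w k), ← norm_inner_symm]
    have hb2 : Summable fun k => ‖⟪u k, v n⟫_ℂ‖ ^ 2 := hu.inner_products_summable (v n)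
    have hb2' : ∑' k, ‖⟪u k, v n⟫_ℂ‖ ^ 2 ≤ ‖v n‖ ^ 2 := hu.tsum_inner_products_le (v n)
    have hmaj : Summable fun k => (t * ‖φ n (w k)‖ ^ 2 + ‖⟪u k, v n⟫_ℂ‖ ^ 2 / t) / 2 :=
      (((hb1.mul_left t).add (hb2.div_const t)).div_const 2)
    have hle : ∀ k, a (n, k) ≤ (t * ‖φ n (w k)‖ ^ 2 + ‖⟪u k, v n⟫_ℂ‖ ^ 2 / t) / 2 :=
      fun k => amgm_weighted ht
    have hrs : Summable fun k => a (n, k) :=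
      Summable.of_nonneg_of_le (fun k => ha0 _) hle hmaj
    refine ⟨hrs, ?_⟩
    calc ∑' k, a (n, k)
        ≤ ∑' k, (t * ‖φ n (w k)‖ ^ 2 + ‖⟪u k, v n⟫_ℂ‖ ^ 2 / t) / 2 :=
          Summable.tsum_le_tsum hle hrs hmaj
      _ = (t * ∑' k, ‖φ n (w k)‖ ^ 2 + (∑' k, ‖⟪u k, v n⟫_ℂ‖ ^ 2) / t) / 2 := by
          rw [tsum_div_const, Summable.tsum_add (hb1.mul_left t) (hb2.div_const t),
            tsum_mul_left, tsum_div_const]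
      _ ≤ (t * ‖φ n‖ ^ 2 + ‖v n‖ ^ 2 / t) / 2 := by gcongr
      _ = ‖φ n‖ * ‖v n‖ := by
          field_simp [htdef]
          rw [htdef, div_pow, div_mul_cancel₀ (‖v n‖ ^ 2) (pow_ne_zero 2 hφpos.ne'), div_mul_cancel₀ (‖v n‖) hφpos.ne']
          ring
  have hprod : Summable a := by
    refine (summable_prod_of_nonneg ha0).mpr ⟨fun n => (hrow n).1, ?_⟩
    exact Summable.of_nonneg_of_le (fun n => tsum_nonneg fun k => ha0 _)
      (fun n => (hrow n).2) hsum
  have hcol : Summable fun k => ∑' n, a (n, k) := by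
    have := hprod.prod_symm
    exact ((summable_prod_of_nonneg (fun p => ha0 _)).mp this).2
  -- pointwise bound on the inner products
  refine Summable.of_nonneg_of_le (fun k => norm_nonneg _) (fun k => ?_) hcol
  have hinner : HasSum (fun n => (φ n (w k)) * ⟪u k, v n⟫_ℂ) ⟪u k, T (w k)⟫_ℂ := by
    have := (hT (w k)).mapL (innerSL ℂ (u k))
    simpa [inner_smul_right] using this
  have hcols : Summable fun n => a (n, k) := by
    have hinj : Function.Injective (fun n : ℕ => (n, k)) := fun m m' h => by simpa using h
    exact hprod.comp_injective hinj
  calc ‖⟪u k, T (w k)⟫_ℂ‖ ≤ ∑' n, ‖(φ n (w k)) * ⟪u k, v n⟫_ℂ‖ := by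
        refine hinner.tsum_eq ▸ norm_tsum_le_tsum_norm ?_
        convert hcols using 2 with n
        simp [ha, norm_mul]
    _ = ∑' n, a (n, k) := by
        congr 1; ext n; simp [ha, norm_mul]
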